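/- The simplex graph of the complement of the path graph P_n is isomorphic to the Fibonacci cube of order n; in particular it has F_{n+2} vertices. -/

import Mathlib

open SimpleGraph

/-- The simplex graph of `G`. -/
def simplexGraph {V : Type*} (G : SimpleGraph V) :
    SimpleGraph {s : Set V // G.IsClique s} where
  Adj s t := ∃ v, (v ∉ s.1 ∧ t.1 = insert v s.1) ∨ (v ∉ t.1 ∧ s.1 = insert v t.1)
  symm := by
    constructor
    rintro s t ⟨v, h | h⟩
    · exact ⟨v, Or.inr h⟩
    · exact ⟨v, Or.inl h⟩
  loopless := by
    constructor
    rintro s ⟨v, ⟨hv, he⟩ | ⟨hv, he⟩⟩ <;> exact hv (he ▸ Set.mem_insert v _)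

/-- The hypercube graph `Qₙ`. -/
def hypercubeGraph (n : ℕ) : SimpleGraph (Fin n → Bool) where
  Adj x y := (Finset.univ.filter fun i => x i ≠ y i).card = 1
  symm := by
    constructor
    intro x y h
    simpa [ne_comm] using h
  loopless := by constructor; intro x h; simp at h

/-- The Fibonacci cube of order `n`: the subgraph of `Qₙ` induced by the binary
strings with no two consecutive 1s. -/
def fibonacciCube (n : ℕ) : SimpleGraph {x : Fin n → Bool //
    ∀ i : Fin n, ∀ h : (i : ℕ) + 1 < n, ¬(x i = true ∧ x ⟨(i : ℕ) + 1, h⟩ = true)} :=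
  (hypercubeGraph n).induce _


def NoTwo (n : ℕ) (x : Fin n → Bool) : Prop :=
  ∀ i : Fin n, ∀ h : (i : ℕ) + 1 < n, ¬(x i = true ∧ x ⟨(i : ℕ) + 1, h⟩ = true)

lemma noTwo_cons {n : ℕ} (b : Bool) (y : Fin (n+1) → Bool) :
    NoTwo (n+2) (Fin.cons b y) ↔ NoTwo (n+1) y ∧ ¬(b = true ∧ y 0 = true) := by
  constructor
  · intro h
    refine ⟨fun i hi hxy => ?_, fun hb => ?_⟩
    · exact h i.succ (by simp; omega) (by
        show (Fin.cons b y : Fin (n+2) → Bool) i.succ = true ∧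
          (Fin.cons b y : Fin (n+2) → Bool) (Fin.succ ⟨(i:ℕ)+1, hi⟩) = true
        rw [Fin.cons_succ, Fin.cons_succ]; exact hxy)
    · exact h 0 (by simp) (by
        simpa [show (⟨((0 : Fin (n+2)):ℕ)+1, by simp⟩ : Fin (n+2)) = Fin.succ 0 from rfl]
          using hb)
  · rintro ⟨hy, hb⟩ i hi hxy
    induction i using Fin.cases with
    | zero => exact hb (by
        simpa [show (⟨((0 : Fin (n+2)):ℕ)+1, hi⟩ : Fin (n+2)) = Fin.succ 0 from rfl]
          using hxy)
    | succ j =>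
        exact hy j (by simpa using hi) (by
          have hxy' : (Fin.cons b y : Fin (n+2) → Bool) j.succ = true ∧
              (Fin.cons b y : Fin (n+2) → Bool) (Fin.succ ⟨(j:ℕ)+1, by simpa using hi⟩) = true :=
            hxy
          rw [Fin.cons_succ, Fin.cons_succ] at hxy'; exact hxy')

def splitEquiv (n : ℕ) :
    {x : Fin (n+2) → Bool // NoTwo (n+2) x} ≃
      {y : Fin (n+1) → Bool // NoTwo (n+1) y} ⊕ {z : Fin n → Bool // NoTwo n z} where
  toFun x :=
    if hx : x.1 0 = true then
      Sum.inr ⟨fun i => x.1 i.succ.succ, by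
        intro i hi hxy
        refine x.2 i.succ.succ (by simp; omega) ⟨hxy.1, ?_⟩
        have : (⟨((i.succ.succ : Fin (n+2)) : ℕ) + 1, by simp; omega⟩ : Fin (n+2)) =
            (⟨(i:ℕ)+1, hi⟩ : Fin n).succ.succ := by
          apply Fin.ext; simp
        rw [this]; exact hxy.2⟩
    else
      Sum.inl ⟨fun i => x.1 i.succ, by
        intro i hi hxy
        refine x.2 i.succ (by simp; omega) ⟨hxy.1, ?_⟩
        have : (⟨((i.succ : Fin (n+2)) : ℕ) + 1, by simp; omega⟩ : Fin (n+2)) =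
            (⟨(i:ℕ)+1, hi⟩ : Fin (n+1)).succ := by
          apply Fin.ext; simp
        rw [this]; exact hxy.2⟩
  invFun s :=
    match s with
    | Sum.inl y => ⟨Fin.cons false y.1, (noTwo_cons _ _).2 ⟨y.2, by simp⟩⟩
    | Sum.inr z => ⟨Fin.cons true (Fin.cons false z.1), by
        rcases n with _ | m
        · intro i hi hxy
          have hv : (i:ℕ) = 0 := by omega
          have h0 : i = 0 := by apply Fin.ext; simp [hv]
          subst h0
          have : (⟨((0 : Fin 2):ℕ)+1, hi⟩ : Fin 2) = Fin.succ 0 := rfl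
          rw [this] at hxy
          simp [Fin.cons_succ] at hxy
        · exact (noTwo_cons _ _).2 ⟨(noTwo_cons _ _).2 ⟨z.2, by simp⟩, by simp⟩⟩
  left_inv := by
    rintro ⟨x, hx⟩
    by_cases h0 : x 0 = true
    · simp only [h0, dif_pos]
      apply Subtype.ext
      funext i
      induction i using Fin.cases with
      | zero => simp [h0]
      | succ j =>
        induction j using Fin.cases with
        | zero =>
          simp only [Fin.cons_succ, Fin.cons_zero]
          -- need x 1 = false
          have h1 : ((0:Fin (n+2)):ℕ) + 1 < n + 2 := by simp
          have := hx 0 h1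
          have hx1 : x ⟨1, h1⟩ = false := by
            by_contra hc
            exact this ⟨h0, by simpa using eq_true_of_ne_false fun h => hc (h ▸ rfl)⟩
          have : (Fin.succ (0 : Fin (n+1))) = (⟨1, h1⟩ : Fin (n+2)) := rfl
          rw [this, hx1]
        | succ k => simp
    · simp only [h0, dif_neg, not_false_iff]
      apply Subtype.ext
      funext i
      induction i using Fin.cases with
      | zero => simp [Bool.eq_false_iff.2 h0]
      | succ j => simp
  right_inv := by
    rintro (⟨y, hy⟩ | ⟨z, hz⟩)
    · simp
    · simp

def noTwoOneEquiv : {x : Fin 1 → Bool // NoTwo 1 x} ≃ Bool where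
  toFun x := x.1 0
  invFun b := ⟨fun _ => b, by intro i hi; omega⟩
  left_inv x := by
    apply Subtype.ext; funext i
    have : i = 0 := by apply Fin.ext; have := i.isLt; omega
    rw [this]
  right_inv b := rfl

instance noTwoUnique : Unique {x : Fin 0 → Bool // NoTwo 0 x} where
  default := ⟨fun i => i.elim0, by intro i; exact i.elim0⟩
  uniq x := by apply Subtype.ext; funext i; exact i.elim0

lemma card_noTwo : ∀ n, Nat.card {x : Fin n → Bool // NoTwo n x} = Nat.fib (n+2)
  | 0 => by simp [Nat.card_unique]
  | 1 => by rw [Nat.card_congr noTwoOneEquiv]; simp [Nat.card_eq_fintype_card]; decide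
  | (n+2) => by
      rw [Nat.card_congr (splitEquiv n), Nat.card_sum, card_noTwo (n+1), card_noTwo n]
      have h := Nat.fib_add_two (n := n+2)
      simp only [show n+2+2 = n+4 from rfl, show n+2+1 = n+3 from rfl,
        show n+1+2 = n+3 from rfl] at *
      omega

lemma clique_iff {n : ℕ} (s : Set (Fin n)) :
    (pathGraph n)ᶜ.IsClique s ↔
      ∀ i : Fin n, ∀ h : (i:ℕ)+1 < n, ¬(i ∈ s ∧ (⟨(i:ℕ)+1, h⟩ : Fin n) ∈ s) := by
  constructor
  · rintro hc i h ⟨hi, hj⟩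
    have hne : i ≠ (⟨(i:ℕ)+1, h⟩ : Fin n) := by
      intro he; have := congrArg Fin.val he; simp at this
    have := ((isClique_iff _).1 hc) hi hj hne
    rw [compl_adj] at this
    exact this.2 (pathGraph_adj.2 (Or.inl rfl))
  · intro h
    rw [isClique_iff _]
    intro a ha b hb hne
    rw [compl_adj]
    refine ⟨hne, fun hadj => ?_⟩
    rcases pathGraph_adj.1 hadj with hab | hba
    · have hblt : (a:ℕ) + 1 < n := by have := b.isLt; omega
      have hb' : (⟨(a:ℕ)+1, hblt⟩ : Fin n) = b := Fin.ext hab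
      exact h a hblt ⟨ha, hb' ▸ hb⟩
    · have halt : (b:ℕ) + 1 < n := by have := a.isLt; omega
      have ha' : (⟨(b:ℕ)+1, halt⟩ : Fin n) = a := Fin.ext hba
      exact h b halt ⟨hb, ha' ▸ ha⟩

open Classical in
noncomputable def cliqueEquiv (n : ℕ) :
    {s : Set (Fin n) // (pathGraph n)ᶜ.IsClique s} ≃ {x : Fin n → Bool // NoTwo n x} where
  toFun s := ⟨fun i => decide (i ∈ s.1), by
    intro i h hx
    exact (clique_iff s.1).1 s.2 i h ⟨of_decide_eq_true hx.1, of_decide_eq_true hx.2⟩⟩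
  invFun x := ⟨{i | x.1 i = true}, (clique_iff _).2 (by
    intro i h hm; exact x.2 i h ⟨hm.1, hm.2⟩)⟩
  left_inv s := by apply Subtype.ext; ext i; simp
  right_inv x := by apply Subtype.ext; funext i; simp

open Classical in
lemma adj_iff {n : ℕ} (s t : Set (Fin n)) :
    (∃ v, (v ∉ s ∧ t = insert v s) ∨ (v ∉ t ∧ s = insert v t)) ↔
      (Finset.univ.filter fun i =>
        (decide (i ∈ s) : Bool) ≠ decide (i ∈ t)).card = 1 := by
  rw [Finset.card_eq_one]
  constructor
  · rintro ⟨v, ⟨hv, ht⟩ | ⟨hv, hs⟩⟩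
    · refine ⟨v, Finset.ext fun i => ?_⟩
      simp only [Finset.mem_filter, Finset.mem_univ, true_and, Finset.mem_singleton,
        ne_eq, decide_eq_decide, ht]
      constructor
      · intro h
        by_contra hne
        exact h (by simp [Set.mem_insert_iff, hne])
      · rintro rfl
        simp [hv]
    · refine ⟨v, Finset.ext fun i => ?_⟩
      simp only [Finset.mem_filter, Finset.mem_univ, true_and, Finset.mem_singleton,
        ne_eq, decide_eq_decide, hs]
      constructor
      · intro h
        by_contra hne
        exact h (by simp [Set.mem_insert_iff, hne])
      · rintro rfl
        simp [hv]
  · rintro ⟨v, hv⟩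
    have key : ∀ i, (¬(i ∈ s ↔ i ∈ t)) ↔ i = v := by
      intro i
      have := Finset.ext_iff.1 hv i
      simpa [ne_eq, decide_eq_decide] using this
    have hvne : ¬(v ∈ s ↔ v ∈ t) := (key v).2 rfl
    by_cases hvs : v ∈ s
    · have hvt : v ∉ t := fun h => hvne ⟨fun _ => h, fun _ => hvs⟩
      refine ⟨v, Or.inr ⟨hvt, Set.ext fun i => ?_⟩⟩
      simp only [Set.mem_insert_iff]
      constructor
      · intro his
        by_cases hiv : i = v
        · exact Or.inl hiv
        · refine Or.inr ?_
          by_contra hit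
          exact hiv ((key i).1 fun h => hit (h.1 his))
      · rintro (rfl | hit)
        · exact hvs
        · by_contra his
          have hiv : i = v := (key i).1 fun h => his (h.2 hit)
          exact hvt (hiv ▸ hit)
    · have hvt : v ∈ t := by
        by_contra h
        exact hvne ⟨fun h' => absurd h' hvs, fun h' => absurd h' h⟩
      refine ⟨v, Or.inl ⟨hvs, Set.ext fun i => ?_⟩⟩
      simp only [Set.mem_insert_iff]
      constructor
      · intro hit
        by_cases hiv : i = v
        · exact Or.inl hiv
        · refine Or.inr ?_
          by_contra his
          exact hiv ((key i).1 fun h => his (h.2 hit))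
      · rintro (rfl | his)
        · exact hvt
        · by_contra hit
          have hiv : i = v := (key i).1 fun h => hit (h.1 his)
          exact hvs (hiv ▸ his)

noncomputable def theIso (n : ℕ) : simplexGraph (pathGraph n)ᶜ ≃g fibonacciCube n where
  toEquiv := cliqueEquiv n
  map_rel_iff' := by
    intro s t
    exact (adj_iff s.1 t.1).symm

theorem simplexGraph_compl_pathGraph_iso_fibonacciCube (n : ℕ) :
    Nonempty (simplexGraph (pathGraph n)ᶜ ≃g fibonacciCube n) ∧
      Nat.card {s : Set (Fin n) // (pathGraph n)ᶜ.IsClique s} = Nat.fib (n + 2) := by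
  exact ⟨⟨theIso n⟩, by rw [Nat.card_congr (cliqueEquiv n)]; exact card_noTwo n⟩
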